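/- Let X and Y be integrable real-valued random variables on a probability space. Then E[c(X)] ≤ E[c(Y)] holds for every convex function c: ℝ → ℝ such that c(X) and c(Y) are integrable, if and only if E[X] = E[Y] and E[(X−K)⁺] ≤ E[(Y−K)⁺] for every K ∈ ℝ. -/

import Mathlib

open MeasureTheory Set Filter

set_option linter.unusedSectionVars false

namespace ConvexOrderCalls

noncomputable section

variable (c : ℝ → ℝ)

/-- Slope of the secant of `c` over `[a,b]`. -/
def sl (a b : ℝ) : ℝ := (c b - c a) / (b - a)

/-- A subgradient of `c` at `q` (sup of slopes from the left). -/
def ls (q : ℝ) : ℝ := sSup ((fun y => sl c y q) '' Iio q)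

/-- Supporting line of `c` at `q`, evaluated at `x`. -/
def supl (q x : ℝ) : ℝ := c q + ls c q * (x - q)

/-- Crossing point of the supporting lines at `t j` and `t (j+1)`. -/
def Kp (t : ℕ → ℝ) (j : ℕ) : ℝ :=
  if ls c (t j) = ls c (t (j + 1)) then t (j + 1)
  else ((c (t j) - ls c (t j) * t j) - (c (t (j + 1)) - ls c (t (j + 1)) * t (j + 1))) /
      (ls c (t (j + 1)) - ls c (t j))

/-- Dyadic grid point. -/
def gp (n j : ℕ) : ℝ := -(n : ℝ) + j * (2 : ℝ)⁻¹ ^ n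

/-- Number of grid intervals at stage `n`. -/
def M (n : ℕ) : ℕ := 2 * n * 2 ^ n

/-- The approximation of `c` at stage `n`: max of supporting lines at the grid points. -/
def capp (n : ℕ) (x : ℝ) : ℝ :=
  (Finset.range (M n + 1)).sup' (by simp) fun j => supl c (gp n j) x

variable {c}

lemma sl_mono (hc : ConvexOn ℝ univ c) {x y z : ℝ} (hxy : x < y) (hyz : y < z) :
    sl c x y ≤ sl c y z := hc.slope_mono_adjacent trivial trivial hxy hyz

lemma sl_rev (a b : ℝ) : sl c a b = (c a - c b) / (a - b) := by
  rw [sl, ← neg_div_neg_eq]; ring_nf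

lemma sl_mono_right (hc : ConvexOn ℝ univ c) {a x y : ℝ} (hax : a < x) (hxy : x ≤ y) :
    sl c a x ≤ sl c a y :=
  hc.secant_mono trivial trivial trivial hax.ne' (hax.trans_le hxy).ne' hxy

lemma sl_mono_left (hc : ConvexOn ℝ univ c) {x y b : ℝ} (hxy : x ≤ y) (hyb : y < b) :
    sl c x b ≤ sl c y b := by
  rw [sl_rev x b, sl_rev y b]
  exact hc.secant_mono trivial trivial trivial (hxy.trans_lt hyb).ne hyb.ne hxy

lemma ls_bddAbove (hc : ConvexOn ℝ univ c) (q : ℝ) :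
    BddAbove ((fun y => sl c y q) '' Iio q) := by
  refine ⟨sl c q (q + 1), ?_⟩
  rintro _ ⟨y, hy, rfl⟩
  exact sl_mono hc hy (by linarith)

lemma sl_le_ls (hc : ConvexOn ℝ univ c) {y q : ℝ} (h : y < q) : sl c y q ≤ ls c q :=
  le_csSup (ls_bddAbove hc q) ⟨y, h, rfl⟩

lemma ls_le_sl (hc : ConvexOn ℝ univ c) {q r : ℝ} (h : q < r) : ls c q ≤ sl c q r := by
  refine csSup_le ⟨sl c (q - 1) q, ⟨q - 1, by simp, rfl⟩⟩ ?_
  rintro _ ⟨y, hy, rfl⟩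
  exact sl_mono hc hy h

lemma ls_mono (hc : ConvexOn ℝ univ c) : Monotone (ls c) := by
  intro q q' h
  rcases eq_or_lt_of_le h with rfl | h
  · exact le_rfl
  · exact (ls_le_sl hc h).trans (sl_le_ls hc h)

lemma supl_le (hc : ConvexOn ℝ univ c) (q x : ℝ) : supl c q x ≤ c x := by
  rcases lt_trichotomy x q with h | rfl | h
  · have h1 : sl c x q ≤ ls c q := sl_le_ls hc h
    rw [sl] at h1
    rw [div_le_iff₀ (by linarith : (0:ℝ) < q - x)] at h1
    rw [supl]; nlinarith
  · simp [supl]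
  · have h1 : ls c q ≤ sl c q x := ls_le_sl hc h
    rw [sl] at h1
    rw [le_div_iff₀ (by linarith : (0:ℝ) < x - q)] at h1
    rw [supl]; nlinarith

lemma supl_self (q : ℝ) : supl c q q = c q := by simp [supl]


lemma sup'_range_succ (f : ℕ → ℝ) (k : ℕ) :
    (Finset.range (k + 2)).sup' (by simp) f
      = f (k + 1) ⊔ (Finset.range (k + 1)).sup' (by simp) f := by
  apply le_antisymm
  · refine Finset.sup'_le _ _ fun j hj => ?_
    rcases Nat.lt_succ_iff_lt_or_eq.mp (Finset.mem_range.mp hj) with h | rfl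
    · exact le_sup_of_le_right (Finset.le_sup' _ (Finset.mem_range.mpr h))
    · exact le_sup_left
  · refine sup_le (Finset.le_sup' _ (by simp)) (Finset.sup'_le _ _ fun j hj => Finset.le_sup' _ ?_)
    exact Finset.mem_range.mpr (Nat.lt_succ_of_lt (Finset.mem_range.mp hj))

section Decomp

variable (hc : ConvexOn ℝ univ c) {t : ℕ → ℝ} (ht : ∀ j, t j < t (j + 1))
include hc ht

/-- key identity for differences of consecutive supporting lines -/
lemma supl_diff (j : ℕ) (x : ℝ) :
    supl c (t (j + 1)) x - supl c (t j) x
      = (ls c (t (j + 1)) - ls c (t j)) * (x - Kp c t j) := by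
  rw [Kp]
  split_ifs with h
  · have h1 := supl_le hc (t j) (t (j + 1))
    have h2 := supl_le hc (t (j + 1)) (t j)
    simp only [supl] at h1 h2 ⊢
    rw [← h] at h2 ⊢
    ring_nf at h1 h2 ⊢
    linarith
  · have hd : ls c (t (j + 1)) - ls c (t j) ≠ 0 := sub_ne_zero.mpr (Ne.symm h)
    simp only [supl]
    field_simp
    ring
  done

lemma Kp_mem (j : ℕ) : t j ≤ Kp c t j ∧ Kp c t j ≤ t (j + 1) := by
  by_cases h : ls c (t j) = ls c (t (j + 1))
  · rw [Kp, if_pos h]; exact ⟨(ht j).le, le_rfl⟩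
  · have hd : 0 < ls c (t (j + 1)) - ls c (t j) := by
      have := ls_mono hc (ht j).le
      cases lt_or_eq_of_le this with
      | inl h' => linarith
      | inr h' => exact absurd h' h
    constructor
    · have h2 := supl_le hc (t (j + 1)) (t j)
      have h3 := supl_diff hc ht j (t j)
      have h4 : supl c (t j) (t j) = c (t j) := by simp [supl]
      nlinarith
    · have h2 := supl_le hc (t j) (t (j + 1))
      have h3 := supl_diff hc ht j (t (j + 1))
      have h4 : supl c (t (j + 1)) (t (j + 1)) = c (t (j + 1)) := by simp [supl]
      nlinarith

lemma supl_succ_le (j : ℕ) {x : ℝ} (hx : x ≤ Kp c t j) :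
    supl c (t (j + 1)) x ≤ supl c (t j) x := by
  have h := supl_diff hc ht j x
  have hd : 0 ≤ ls c (t (j + 1)) - ls c (t j) := by
    have := ls_mono hc (ht j).le; linarith
  nlinarith

lemma le_supl_succ (j : ℕ) {x : ℝ} (hx : Kp c t j ≤ x) :
    supl c (t j) x ≤ supl c (t (j + 1)) x := by
  have h := supl_diff hc ht j x
  have hd : 0 ≤ ls c (t (j + 1)) - ls c (t j) := by
    have := ls_mono hc (ht j).le; linarith
  nlinarith

lemma t_mono : Monotone t := monotone_nat_of_le_succ fun j => (ht j).le

lemma supl_le_supl (k : ℕ) : ∀ j ≤ k, ∀ x : ℝ, t k ≤ x →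
    supl c (t j) x ≤ supl c (t k) x := by
  induction k with
  | zero => intro j hj x _; interval_cases j; exact le_rfl
  | succ k ih =>
    intro j hj x hx
    have hxk : Kp c t k ≤ x := le_trans (Kp_mem hc ht k).2 hx
    rcases Nat.eq_or_lt_of_le hj with rfl | hj'
    · exact le_rfl
    · have h1 : supl c (t j) x ≤ supl c (t k) x :=
        ih j (Nat.lt_succ_iff.mp hj') x (le_trans (ht k).le hx)
      exact h1.trans (le_supl_succ hc ht k hxk)

/-- The decomposition of the max of supporting lines into calls. -/
lemma sup_supl_eq (k : ℕ) (x : ℝ) :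
    (Finset.range (k + 1)).sup' (by simp) (fun j => supl c (t j) x)
      = supl c (t 0) x
        + ∑ j ∈ Finset.range k, (ls c (t (j + 1)) - ls c (t j)) * max (x - Kp c t j) 0 := by
  induction k with
  | zero => simp
  | succ k ih =>
    rw [sup'_range_succ, Finset.sum_range_succ]
    rcases le_total x (Kp c t k) with hx | hx
    · have h0 : max (x - Kp c t k) 0 = 0 := by simp only [max_eq_right_iff]; linarith
      rw [h0, mul_zero, add_zero, ← ih, sup_eq_right]
      calc supl c (t (k + 1)) x ≤ supl c (t k) x := supl_succ_le hc ht k hx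
        _ ≤ _ := Finset.le_sup' (fun j => supl c (t j) x) (by simp : k ∈ Finset.range (k + 1))
    · have htk : t k ≤ x := le_trans (Kp_mem hc ht k).1 hx
      have hGk : (Finset.range (k + 1)).sup' (by simp) (fun j => supl c (t j) x)
          = supl c (t k) x := by
        apply le_antisymm
        · exact Finset.sup'_le _ _ fun j hj =>
            supl_le_supl hc ht k j (Nat.lt_succ_iff.mp (Finset.mem_range.mp hj)) x htk
        · exact Finset.le_sup' (fun j => supl c (t j) x) (by simp : k ∈ Finset.range (k + 1))
      have hsum : supl c (t k) x
          = supl c (t 0) x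
            + ∑ j ∈ Finset.range k, (ls c (t (j + 1)) - ls c (t j)) * max (x - Kp c t j) 0 :=
        hGk.symm.trans ih
      have h0 : max (x - Kp c t k) 0 = x - Kp c t k := by simp only [max_eq_left_iff]; linarith
      rw [hGk, h0, sup_eq_left.mpr (le_supl_succ hc ht k hx)]
      have hd := supl_diff hc ht k x
      linarith

end Decomp

lemma gp_lt (n : ℕ) : ∀ j, gp n j < gp n (j + 1) := by
  intro j
  have : (0:ℝ) < (2 : ℝ)⁻¹ ^ n := by positivity
  simp only [gp]
  push_cast
  nlinarith

lemma gp_nest (n j : ℕ) : gp n j = gp (n + 1) (2 ^ (n + 1) + 2 * j) := by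
  have key : (2 : ℝ) ^ (n + 1) * (2:ℝ)⁻¹ ^ (n + 1) = 1 := by
    rw [← mul_pow]; norm_num
  simp only [gp]
  push_cast
  have h2 : ((2:ℝ)⁻¹) ^ (n + 1) * 2 = (2:ℝ)⁻¹ ^ n := by
    rw [pow_succ, mul_assoc]; norm_num
  nlinarith [h2, key]

lemma M_nest (n j : ℕ) (hj : j ≤ M n) : 2 ^ (n + 1) + 2 * j ≤ M (n + 1) := by
  simp only [M] at *
  have h1 : 2 ^ (n + 1) = 2 * 2 ^ n := by ring
  nlinarith [Nat.one_le_two_pow (n := n)]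

lemma capp_le (hc : ConvexOn ℝ univ c) (n : ℕ) (x : ℝ) : capp c n x ≤ c x :=
  Finset.sup'_le _ _ fun j _ => supl_le hc _ x

lemma capp_succ_le (n : ℕ) (x : ℝ) : capp c n x ≤ capp c (n + 1) x := by
  refine Finset.sup'_le _ _ fun j hj => ?_
  rw [gp_nest n j]
  exact Finset.le_sup' (f := fun j => supl c (gp (n+1) j) x)
    (Finset.mem_range.mpr (Nat.lt_succ_of_le (M_nest n j (Nat.lt_succ_iff.mp (Finset.mem_range.mp hj)))))

lemma capp_mono (x : ℝ) : Monotone fun n => capp c n x :=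
  monotone_nat_of_le_succ fun n => capp_succ_le n x

lemma capp_tendsto (hc : ConvexOn ℝ univ c) (x : ℝ) :
    Tendsto (fun n => capp c n x) atTop (nhds (c x)) := by
  set A := sl c (x - 2) (x - 1) with hA
  set C := ls c x - A with hC
  have hlow : ∀ᶠ n in atTop, c x - C * (2:ℝ)⁻¹ ^ n ≤ capp c n x := by
    filter_upwards [eventually_ge_atTop (⌈|x|⌉₊ + 1)] with n hn
    have hn1 : |x| + 1 ≤ (n : ℝ) := by
      have h1 : ((⌈|x|⌉₊ + 1 : ℕ) : ℝ) ≤ (n : ℝ) := Nat.cast_le.mpr hn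
      have h2 : |x| ≤ (⌈|x|⌉₊ : ℝ) := Nat.le_ceil _
      push_cast at h1
      linarith
    have hxn1 : x ≤ (n:ℝ) - 1 := by cases abs_le.mp (le_refl |x|) with
      | intro hl hr => linarith [le_abs_self x]
    have hxn2 : -(n:ℝ) + 1 ≤ x := by linarith [neg_abs_le x]
    set j : ℕ := ⌊(x + n) * 2 ^ n⌋₊ with hj
    have hpos : (0:ℝ) ≤ (x + n) * 2 ^ n := mul_nonneg (by linarith) (by positivity)
    have key : (2 : ℝ) ^ n * (2:ℝ)⁻¹ ^ n = 1 := by rw [← mul_pow]; norm_num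
    have hP : (0:ℝ) < (2:ℝ)⁻¹ ^ n := by positivity
    have hP1 : (2:ℝ)⁻¹ ^ n ≤ 1 := by
      apply pow_le_one₀ <;> norm_num
    have hfl : (j : ℝ) ≤ (x + n) * 2 ^ n := Nat.floor_le hpos
    have hfl2 : (x + n) * 2 ^ n < (j : ℝ) + 1 := Nat.lt_floor_add_one _
    set q : ℝ := gp n j with hq
    have hq_le : q ≤ x := by
      have := mul_le_mul_of_nonneg_right hfl hP.le
      rw [mul_assoc] at this
      simp only [hq, gp]
      nlinarith
    have hq_ge : x - (2:ℝ)⁻¹ ^ n ≤ q := by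
      have := mul_le_mul_of_nonneg_right hfl2.le hP.le
      rw [mul_assoc] at this
      simp only [hq, gp]
      nlinarith
    have hjM : j ∈ Finset.range (M n + 1) := by
      rw [Finset.mem_range, Nat.lt_succ_iff, hj]
      have : (x + n) * 2 ^ n ≤ ((M n : ℕ) : ℝ) := by
        simp only [M]
        push_cast
        nlinarith [pow_pos (by norm_num : (0:ℝ) < 2) n]
      calc ⌊(x + n) * 2 ^ n⌋₊ ≤ ⌊((M n : ℕ) : ℝ)⌋₊ := Nat.floor_mono this
        _ = M n := Nat.floor_natCast _
    -- bounds on the subgradient at q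
    have hAq : A ≤ ls c q := by
      have h1 : sl c (x - 2) (x - 1) ≤ sl c (x - 2) q :=
        sl_mono_right hc (by linarith) (by linarith)
      have h2 : sl c (x - 2) q ≤ ls c q := sl_le_ls hc (by linarith)
      linarith
    have hlsq : ls c q ≤ ls c x := ls_mono hc hq_le
    have hsupp : c x + ls c x * (q - x) ≤ c q := by
      have := supl_le hc x q; rw [supl] at this; linarith
    have hcapp : supl c q x ≤ capp c n x :=
      Finset.le_sup' (f := fun j => supl c (gp n j) x) hjM
    rw [supl] at hcapp
    have hkey : (x - q) * (ls c x - ls c q) ≤ (2:ℝ)⁻¹ ^ n * (ls c x - A) :=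
      mul_le_mul (by linarith) (by linarith) (by linarith) hP.le
    simp only [hC]
    nlinarith
  have h1 : Tendsto (fun n : ℕ => c x - C * (2:ℝ)⁻¹ ^ n) atTop (nhds (c x)) := by
    have h0 : Tendsto (fun n : ℕ => ((2:ℝ)⁻¹) ^ n) atTop (nhds 0) :=
      tendsto_pow_atTop_nhds_zero_of_lt_one (by norm_num) (by norm_num)
    have h2 : Tendsto (fun n : ℕ => c x - C * (2:ℝ)⁻¹ ^ n) atTop (nhds (c x - C * 0)) :=
      (tendsto_const_nhds : Tendsto (fun _ : ℕ => c x) atTop (nhds (c x))).sub (h0.const_mul C)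
    simpa using h2
  exact tendsto_of_tendsto_of_tendsto_of_le_of_le' h1 tendsto_const_nhds hlow
    (Eventually.of_forall fun n => capp_le hc n x)


lemma capp_repr (hc : ConvexOn ℝ univ c) (n : ℕ) (x : ℝ) :
    capp c n x = supl c (gp n 0) x
      + ∑ j ∈ Finset.range (M n),
          (ls c (gp n (j + 1)) - ls c (gp n j)) * max (x - Kp c (gp n) j) 0 :=
  sup_supl_eq hc (gp_lt n) (M n) x

section Prob
variable {Ω : Type*} [MeasureSpace Ω] [IsProbabilityMeasure (volume : Measure Ω)]

lemma integrable_call {X : Ω → ℝ} (hX : Integrable X) (K : ℝ) :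
    Integrable (fun ω => max (X ω - K) 0) :=
  (hX.sub (integrable_const K)).pos_part

lemma supl_comp_eq {X : Ω → ℝ} (q : ℝ) :
    (fun ω => supl c q (X ω)) = fun ω => ls c q * X ω + (c q - ls c q * q) := by
  funext ω; simp only [supl]; ring

lemma integrable_supl {X : Ω → ℝ} (hX : Integrable X) (q : ℝ) :
    Integrable (fun ω => supl c q (X ω)) := by
  rw [supl_comp_eq]
  exact (hX.const_mul _).add (integrable_const _)

lemma integral_supl {X : Ω → ℝ} (hX : Integrable X) (q : ℝ) :
    ∫ ω, supl c q (X ω) = ls c q * (∫ ω, X ω) + (c q - ls c q * q) := by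
  rw [supl_comp_eq, integral_add (hX.const_mul _) (integrable_const _),
    integral_const_mul, integral_const]
  simp

lemma integrable_capp (hc : ConvexOn ℝ univ c) {X : Ω → ℝ} (hX : Integrable X) (n : ℕ) :
    Integrable (fun ω => capp c n (X ω)) := by
  have hr : (fun ω => capp c n (X ω)) = fun ω => supl c (gp n 0) (X ω)
      + ∑ j ∈ Finset.range (M n),
          (ls c (gp n (j + 1)) - ls c (gp n j)) * max (X ω - Kp c (gp n) j) 0 := by
    funext ω; exact capp_repr hc n (X ω)
  rw [hr]
  exact (integrable_supl hX _).add
    (integrable_finset_sum _ fun j _ => (integrable_call hX _).const_mul _)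

lemma integral_capp (hc : ConvexOn ℝ univ c) {X : Ω → ℝ} (hX : Integrable X) (n : ℕ) :
    ∫ ω, capp c n (X ω)
      = (ls c (gp n 0) * (∫ ω, X ω) + (c (gp n 0) - ls c (gp n 0) * gp n 0))
        + ∑ j ∈ Finset.range (M n),
            (ls c (gp n (j + 1)) - ls c (gp n j)) * ∫ ω, max (X ω - Kp c (gp n) j) 0 := by
  have hr : (fun ω => capp c n (X ω)) = fun ω => supl c (gp n 0) (X ω)
      + ∑ j ∈ Finset.range (M n),
          (ls c (gp n (j + 1)) - ls c (gp n j)) * max (X ω - Kp c (gp n) j) 0 := by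
    funext ω; exact capp_repr hc n (X ω)
  calc ∫ ω, capp c n (X ω)
      = ∫ ω, (supl c (gp n 0) (X ω)
        + ∑ j ∈ Finset.range (M n),
            (ls c (gp n (j + 1)) - ls c (gp n j)) * max (X ω - Kp c (gp n) j) 0) := by rw [hr]
    _ = _ := by
        rw [integral_add (integrable_supl hX _)
          (integrable_finset_sum _ fun j _ => (integrable_call hX _).const_mul _),
          integral_finset_sum _ fun j _ => (integrable_call hX _).const_mul _,
          integral_supl hX]
        simp_rw [integral_const_mul]

lemma stage_le (hc : ConvexOn ℝ univ c) {X Y : Ω → ℝ} (hX : Integrable X) (hY : Integrable Y)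
    (hmean : (∫ ω, X ω) = ∫ ω, Y ω)
    (hcall : ∀ K : ℝ, ∫ ω, max (X ω - K) 0 ≤ ∫ ω, max (Y ω - K) 0) (n : ℕ) :
    ∫ ω, capp c n (X ω) ≤ ∫ ω, capp c n (Y ω) := by
  rw [integral_capp hc hX, integral_capp hc hY, hmean]
  refine add_le_add le_rfl (Finset.sum_le_sum fun j _ => ?_)
  exact mul_le_mul_of_nonneg_left (hcall _)
    (sub_nonneg.mpr (ls_mono hc (gp_lt n j).le))

end Prob

end

end ConvexOrderCalls

open ConvexOrderCalls

lemma call_convex (K : ℝ) : ConvexOn ℝ univ (fun x : ℝ => max (x - K) 0) := by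
  have h1 : ConvexOn ℝ univ (fun x : ℝ => x - K) :=
    ⟨convex_univ, fun x _ y _ a b _ _ hab => by
      simp only [smul_eq_mul]
      have he : a * (x - K) + b * (y - K) = a * x + b * y - (a + b) * K := by ring
      rw [he, hab]; norm_num⟩
  have h2 : ConvexOn ℝ univ (fun _ : ℝ => (0:ℝ)) := convexOn_const _ convex_univ
  exact h1.sup h2

theorem convex_order_iff_calls_and_means
    {Ω : Type*} [MeasureSpace Ω] [IsProbabilityMeasure (volume : Measure Ω)]
    (X Y : Ω → ℝ) (hX : Integrable X) (hY : Integrable Y) :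
    (∀ c : ℝ → ℝ, ConvexOn ℝ univ c →
        Integrable (fun ω => c (X ω)) → Integrable (fun ω => c (Y ω)) →
        ∫ ω, c (X ω) ≤ ∫ ω, c (Y ω)) ↔
      ((∫ ω, X ω) = ∫ ω, Y ω ∧
        ∀ K : ℝ, ∫ ω, max (X ω - K) 0 ≤ ∫ ω, max (Y ω - K) 0) := by
  constructor
  · intro h
    constructor
    · have h1 := h (fun x => x) (convexOn_id convex_univ) hX hY
      have h2 := h (fun x => -x) ((concaveOn_id convex_univ).neg) hX.neg hY.neg
      simp only [integral_neg] at h2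
      linarith
    · intro K
      exact h _ (call_convex K) (integrable_call hX K) (integrable_call hY K)
  · rintro ⟨hmean, hcall⟩ c hc hcX hcY
    have tX : Tendsto (fun n => ∫ ω, capp c n (X ω)) atTop (nhds (∫ ω, c (X ω))) :=
      integral_tendsto_of_tendsto_of_monotone (integrable_capp hc hX) hcX
        (ae_of_all _ fun ω => capp_mono (X ω))
        (ae_of_all _ fun ω => capp_tendsto hc (X ω))
    have tY : Tendsto (fun n => ∫ ω, capp c n (Y ω)) atTop (nhds (∫ ω, c (Y ω))) :=
      integral_tendsto_of_tendsto_of_monotone (integrable_capp hc hY) hcY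
        (ae_of_all _ fun ω => capp_mono (Y ω))
        (ae_of_all _ fun ω => capp_tendsto hc (Y ω))
    exact le_of_tendsto_of_tendsto' tX tY (stage_le hc hX hY hmean hcall)
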